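/- The 0-multiple-cover formula is stable under the substitution δ ↦ l₀δ followed by m_{l₀}: let f : ℕ≥1 → ℚ, let F(δ) = ∑_{k | δ} f(k)·T_k in 𝒢 for every δ ≥ 1, and fix an integer l₀ ≥ 1. Then for every δ ≥ 1, m_{l₀}(F(l₀·δ)) = ∑_{k | δ} ( ∑_{u | l₀, gcd(k, l₀/u) = 1} f(u·k) ) · T_k. -/

import Mathlib

noncomputable section

/-- `G = (ℝ/ℤ)^r`. -/
abbrev Gr (r : ℕ) : Type := Fin r → AddCircle (1 : ℝ)

/-- The group algebra `𝒢 = ℚ[G]`. -/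
abbrev GA (r : ℕ) : Type := AddMonoidAlgebra ℚ (Gr r)

/-- The multiplication operator `m_d`, the ℚ-linear operator determined by
`m_d((θ)) = (d • θ)`. -/
noncomputable def mulOp (r : ℕ) (d : ℤ) : GA r →ₗ[ℚ] GA r :=
  AddMonoidAlgebra.mapDomainLinearMap ℚ ℚ (fun θ : Gr r => d • θ)

/-- `T_n := n^{-r} • ∑_{τ : n • τ = 0} (τ)`, the average of the `n`-torsion
elements of `G`. -/
noncomputable def Tor (r n : ℕ) : GA r :=
  ((n : ℚ) ^ r)⁻¹ • ∑ᶠ τ ∈ {τ : Gr r | n • τ = 0}, AddMonoidAlgebra.single τ (1 : ℚ)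

open Function

lemma range_toAddCircle (N : ℕ) [NeZero N] :
    Set.range (ZMod.toAddCircle : ZMod N → AddCircle (1:ℝ)) = {x : AddCircle (1:ℝ) | N • x = 0} := by
  ext x
  constructor
  · rintro ⟨j, rfl⟩
    show N • ZMod.toAddCircle j = 0
    rw [← map_nsmul]
    have : N • j = 0 := by
      simp [nsmul_eq_mul, ZMod.natCast_self]
    rw [this, map_zero]
  · intro hx
    induction x using QuotientAddGroup.induction_on with
    | H t =>
      have h : ((N • t : ℝ) : AddCircle (1:ℝ)) = 0 := by
        rw [AddCircle.coe_nsmul]; exact hx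
      rw [AddCircle.coe_eq_zero_iff] at h
      obtain ⟨m, hm⟩ := h
      refine ⟨(m : ZMod N), ?_⟩
      rw [ZMod.toAddCircle_intCast]
      congr 1
      have hN : (N : ℝ) ≠ 0 := Nat.cast_ne_zero.mpr (NeZero.ne N)
      field_simp
      rw [mul_comm]
      simpa [nsmul_eq_mul, mul_comm] using hm

def Phi (r N : ℕ) [NeZero N] : (Fin r → ZMod N) → Gr r := fun v i => ZMod.toAddCircle (v i)

lemma Phi_injective (r N : ℕ) [NeZero N] : Function.Injective (Phi r N) := by
  intro v w h
  funext i
  exact ZMod.toAddCircle_injective N (congrFun h i)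

lemma range_Phi (r N : ℕ) [NeZero N] :
    Set.range (Phi r N) = {τ : Gr r | N • τ = 0} := by
  ext τ
  have h1 : (N • τ = 0) ↔ ∀ i, N • τ i = 0 := by
    constructor
    · intro h i; exact congrFun h i
    · intro h; funext i; exact h i
  constructor
  · rintro ⟨v, rfl⟩
    show N • _ = 0
    rw [h1]
    intro i
    have hm : Phi r N v i ∈ {x : AddCircle (1:ℝ) | N • x = 0} := by
      rw [← range_toAddCircle]; exact ⟨v i, rfl⟩
    exact hm
  · intro hτ
    have hm : ∀ i, ∃ j : ZMod N, ZMod.toAddCircle j = τ i := by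
      intro i
      have hx : τ i ∈ Set.range (ZMod.toAddCircle : ZMod N → AddCircle (1:ℝ)) := by
        rw [range_toAddCircle]; exact (h1.mp hτ) i
      exact hx
    choose v hv using hm
    exact ⟨v, funext hv⟩

lemma Tor_eq (r N : ℕ) [NeZero N] :
    Tor r N = ((N : ℚ) ^ r)⁻¹ • ∑ v : Fin r → ZMod N, AddMonoidAlgebra.single (Phi r N v) (1 : ℚ) := by
  rw [Tor, ← range_Phi, finsum_mem_range (Phi_injective r N), finsum_eq_sum_of_fintype]

lemma sum_comp_surjective {A B M : Type*} [AddGroup A] [AddGroup B] [Fintype A] [Fintype B]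
    [DecidableEq B] [AddCommMonoid M] (φ : A →+ B) (hφ : Surjective φ) (h : B → M) :
    ∑ a : A, h (φ a) = Nat.card φ.ker • ∑ b : B, h b := by
  classical
  rw [Finset.sum_comp (fun b => h b) (fun a => φ a), Finset.image_univ_of_surjective hφ,
    Finset.smul_sum]
  refine Finset.sum_congr rfl fun b _ => ?_
  congr 1
  have e : (φ ⁻¹' {b}) ≃ φ.ker := AddMonoidHom.fiberEquivKerOfSurjective hφ b
  rw [← Nat.card_congr e]
  rw [Nat.card_eq_fintype_card]
  rw [Set.preimage]
  simp [Fintype.card_subtype, Finset.filter_congr]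

lemma card_ker_mul {A B : Type*} [AddGroup A] [AddGroup B] (φ : A →+ B) (hφ : Surjective φ) :
    Nat.card φ.ker * Nat.card B = Nat.card A := by
  have e : (A ⧸ φ.ker) ≃+ B := QuotientAddGroup.quotientKerEquivOfSurjective φ hφ
  rw [← Nat.card_congr e.toEquiv,
    AddSubgroup.card_eq_card_quotient_mul_card_addSubgroup φ.ker, mul_comm]

noncomputable def psi (N N' : ℕ) (h : N' ∣ N) (l₁ : ℕ) : ZMod N →+ ZMod N' :=
  (AddMonoidHom.mulLeft (l₁ : ZMod N')).comp (ZMod.castHom h (ZMod N')).toAddMonoidHom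

lemma psi_surjective (N N' : ℕ) (h : N' ∣ N) (l₁ : ℕ) (hco : Nat.Coprime l₁ N') [NeZero N'] :
    Surjective (psi N N' h l₁) := by
  have h1 : Surjective (ZMod.castHom h (ZMod N')) := by
    intro y
    exact ⟨(y.val : ZMod N), by rw [map_natCast]; exact ZMod.natCast_rightInverse y⟩
  have h2 : Surjective (fun x : ZMod N' => (l₁ : ZMod N') * x) := by
    intro y
    have hu : IsUnit (l₁ : ZMod N') := (ZMod.unitOfCoprime l₁ hco).isUnit
    obtain ⟨u, hu⟩ := hu
    exact ⟨(u⁻¹ : (ZMod N')ˣ) * y, by rw [← hu]; simp [← mul_assoc]⟩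
  exact h2.comp h1

lemma key_smul (N' g l₁ : ℕ) [NeZero N'] [NeZero (N' * g)] (x : ZMod (N' * g)) :
    ((l₁ * g : ℕ) : ℤ) • ZMod.toAddCircle x =
      ZMod.toAddCircle (psi (N' * g) N' (dvd_mul_right N' g) l₁ x) := by
  obtain ⟨j, rfl⟩ := ZMod.intCast_surjective x
  have hg : g ≠ 0 := by
    rintro rfl
    exact (NeZero.ne (N' * 0)) (by simp)
  have hgR : (g : ℝ) ≠ 0 := Nat.cast_ne_zero.mpr hg
  have hN' : (N' : ℝ) ≠ 0 := Nat.cast_ne_zero.mpr (NeZero.ne N')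
  have h1 : ((l₁ * g : ℕ) : ℤ) • ((j : ℤ) : ZMod (N' * g)) = ((l₁ * g * j : ℤ) : ZMod (N' * g)) := by
    rw [← Int.cast_smul_eq_zsmul (ZMod (N' * g)), smul_eq_mul]
    push_cast
    ring
  have h2 : psi (N' * g) N' (dvd_mul_right N' g) l₁ ((j : ℤ) : ZMod (N' * g)) = ((l₁ * j : ℤ) : ZMod N') := by
    simp only [psi, AddMonoidHom.comp_apply, RingHom.toAddMonoidHom_eq_coe,
      AddMonoidHom.coe_coe, map_intCast, AddMonoidHom.coe_mulLeft]
    push_cast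
    ring
  rw [← map_zsmul, h1, h2, ZMod.toAddCircle_intCast, ZMod.toAddCircle_intCast]
  congr 1
  push_cast
  field_simp

lemma mulTor' (r N' g l₁ : ℕ) (hN' : 0 < N') (hg : 0 < g) (hco : Nat.Coprime l₁ N') :
    mulOp r ((l₁ * g : ℕ) : ℤ) (Tor r (N' * g)) = Tor r N' := by
  haveI : NeZero N' := ⟨hN'.ne'⟩
  haveI : NeZero (N' * g) := ⟨(Nat.mul_pos hN' hg).ne'⟩
  classical
  set Ψ : (Fin r → ZMod (N' * g)) →+ (Fin r → ZMod N') :=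
    AddMonoidHom.compLeft (psi (N' * g) N' (dvd_mul_right N' g) l₁) (Fin r) with hΨ
  have hΨ_surj : Surjective Ψ := by
    intro w
    have := psi_surjective (N' * g) N' (dvd_mul_right N' g) l₁ hco
    choose v hv using fun i => this (w i)
    exact ⟨v, funext hv⟩
  have hcard : Nat.card Ψ.ker = g ^ r := by
    have h1 := card_ker_mul Ψ hΨ_surj
    have h2 : Nat.card (Fin r → ZMod N') = N' ^ r := by
      simp [Nat.card_eq_fintype_card, Fintype.card_fun, ZMod.card]
    have h3 : Nat.card (Fin r → ZMod (N' * g)) = (N' * g) ^ r := by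
      simp [Nat.card_eq_fintype_card, Fintype.card_fun, ZMod.card]
    rw [h2, h3] at h1
    have : Nat.card Ψ.ker * N' ^ r = g ^ r * N' ^ r := by
      rw [h1, mul_pow]; ring
    exact Nat.eq_of_mul_eq_mul_right (pow_pos hN' r) this
  rw [Tor_eq r (N' * g), map_smul, map_sum]
  have hsingle : ∀ v : Fin r → ZMod (N' * g),
      mulOp r ((l₁ * g : ℕ) : ℤ) (AddMonoidAlgebra.single (Phi r (N' * g) v) (1:ℚ)) =
        AddMonoidAlgebra.single (Phi r N' (Ψ v)) 1 := by
    intro v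
    have h0 : (mulOp r ((l₁ * g : ℕ) : ℤ)) (AddMonoidAlgebra.single (Phi r (N' * g) v) (1:ℚ)) =
        AddMonoidAlgebra.single (((l₁ * g : ℕ) : ℤ) • Phi r (N' * g) v) (1:ℚ) :=
      AddMonoidAlgebra.mapDomainLinearMap_single _ _ _
    rw [h0]
    congr 1
    funext i
    exact key_smul N' g l₁ (v i)
  rw [Finset.sum_congr rfl fun v _ => hsingle v]
  rw [sum_comp_surjective Ψ hΨ_surj (fun w => AddMonoidAlgebra.single (Phi r N' w) (1:ℚ)), hcard]
  rw [Tor_eq r N']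
  rw [← Nat.cast_smul_eq_nsmul ℚ, smul_smul]
  congr 1
  have hgQ : (g : ℚ) ≠ 0 := Nat.cast_ne_zero.mpr hg.ne'
  have hN'Q : (N' : ℚ) ≠ 0 := Nat.cast_ne_zero.mpr hN'.ne'
  push_cast
  rw [mul_pow]
  field_simp

lemma mulTor (r N l₀ : ℕ) (hN : 0 < N) (hl : 0 < l₀) :
    mulOp r (l₀ : ℤ) (Tor r N) = Tor r (N / Nat.gcd N l₀) := by
  set g := Nat.gcd N l₀ with hgdef
  have hg : 0 < g := Nat.gcd_pos_of_pos_left l₀ hN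
  have hN' : 0 < N / g := Nat.div_pos (Nat.le_of_dvd hN (Nat.gcd_dvd_left N l₀)) hg
  have hNeq : N = (N / g) * g := (Nat.div_mul_cancel (Nat.gcd_dvd_left N l₀)).symm
  have hleq : l₀ = (l₀ / g) * g := (Nat.div_mul_cancel (Nat.gcd_dvd_right N l₀)).symm
  have hco : Nat.Coprime (l₀ / g) (N / g) :=
    Nat.Coprime.symm (Nat.coprime_div_gcd_div_gcd hg)
  calc mulOp r (l₀ : ℤ) (Tor r N)
      = mulOp r (((l₀ / g) * g : ℕ) : ℤ) (Tor r ((N / g) * g)) := by rw [← hNeq, ← hleq]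
    _ = Tor r (N / g) := mulTor' r (N / g) g (l₀ / g) hN' hg hco

lemma gcd_mul_eq (u k l₀ : ℕ) (hu : u ∣ l₀) (hupos : 0 < u) (hco : Nat.gcd k (l₀ / u) = 1) :
    Nat.gcd (u * k) l₀ = u := by
  have hud : u ∣ Nat.gcd (u * k) l₀ := Nat.dvd_gcd (dvd_mul_right u k) hu
  obtain ⟨e, he⟩ := hud
  have he1 : e ∣ k := by
    have h' : u * e ∣ u * k := he ▸ Nat.gcd_dvd_left (u * k) l₀
    exact (mul_dvd_mul_iff_left hupos.ne').mp h'
  have he2 : e ∣ l₀ / u := by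
    rw [Nat.dvd_div_iff_mul_dvd hu]
    exact he ▸ Nat.gcd_dvd_right (u * k) l₀
  have he3 : e ∣ 1 := hco ▸ Nat.dvd_gcd he1 he2
  rw [he, Nat.dvd_one.mp he3, mul_one]

/-- The 0-multiple-cover formula is stable under `δ ↦ l₀δ` followed by `m_{l₀}`:
if `F(δ) = ∑_{k ∣ δ} f(k) • T_k` then
`m_{l₀}(F(l₀·δ)) = ∑_{k ∣ δ} (∑_{u ∣ l₀, gcd(k, l₀/u) = 1} f(u·k)) • T_k`. -/
theorem statement8 (r : ℕ) (hr : 1 ≤ r) (f : ℕ → ℚ) (l₀ δ : ℕ)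
    (hl₀ : 1 ≤ l₀) (hδ : 1 ≤ δ) :
    mulOp r (l₀ : ℤ) (∑ k ∈ (l₀ * δ).divisors, f k • Tor r k) =
      ∑ k ∈ δ.divisors,
        (∑ u ∈ l₀.divisors.filter (fun u => Nat.gcd k (l₀ / u) = 1), f (u * k)) •
          Tor r k := by
  classical
  rw [map_sum]
  rw [Finset.sum_congr rfl (fun k hk => by
    rw [map_smul, mulTor r k l₀ (Nat.pos_of_mem_divisors hk) hl₀])]
  have hR : ∑ k ∈ δ.divisors,
      (∑ u ∈ l₀.divisors.filter (fun u => Nat.gcd k (l₀ / u) = 1), f (u * k)) • Tor r k =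
      ∑ k ∈ δ.divisors, ∑ u ∈ l₀.divisors.filter (fun u => Nat.gcd k (l₀ / u) = 1),
        f (u * k) • Tor r k :=
    Finset.sum_congr rfl fun k _ => Finset.sum_smul
  rw [hR, ← Finset.sum_sigma (δ.divisors) (fun k => l₀.divisors.filter (fun u => Nat.gcd k (l₀ / u) = 1))
    (fun p => f (p.2 * p.1) • Tor r p.1)]
  refine Finset.sum_nbij' (i := fun k => (⟨k / Nat.gcd k l₀, Nat.gcd k l₀⟩ : Σ _ : ℕ, ℕ))
    (j := fun p => p.2 * p.1) ?_ ?_ ?_ ?_ ?_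
  · intro k hk
    obtain ⟨hkd, hne⟩ := Nat.mem_divisors.mp hk
    have hkpos : 0 < k := Nat.pos_of_mem_divisors hk
    set g' := Nat.gcd k l₀ with hg'
    have hg'pos : 0 < g' := Nat.gcd_pos_of_pos_left l₀ hkpos
    have hco : Nat.Coprime (k / g') (l₀ / g') := Nat.coprime_div_gcd_div_gcd hg'pos
    rw [Finset.mem_sigma]
    constructor
    · rw [Nat.mem_divisors]
      refine ⟨?_, (show 0 < δ from hδ).ne'⟩
      have h1 : g' * (k / g') ∣ g' * ((l₀ / g') * δ) := by
        rw [← mul_assoc, Nat.mul_div_cancel' (Nat.gcd_dvd_left k l₀),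
          Nat.mul_div_cancel' (Nat.gcd_dvd_right k l₀)]
        exact hkd
      have h2 : k / g' ∣ (l₀ / g') * δ := (mul_dvd_mul_iff_left hg'pos.ne').mp h1
      exact Nat.Coprime.dvd_of_dvd_mul_left hco h2
    · rw [Finset.mem_filter, Nat.mem_divisors]
      exact ⟨⟨Nat.gcd_dvd_right k l₀, (show 0 < l₀ from hl₀).ne'⟩, hco⟩
  · rintro ⟨k', u⟩ hp
    rw [Finset.mem_sigma, Finset.mem_filter, Nat.mem_divisors, Nat.mem_divisors] at hp
    rw [Nat.mem_divisors]
    exact ⟨mul_dvd_mul hp.2.1.1 hp.1.1, (Nat.mul_pos hl₀ hδ).ne'⟩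
  · intro k hk
    exact Nat.mul_div_cancel' (Nat.gcd_dvd_left k l₀)
  · rintro ⟨k', u⟩ hp
    rw [Finset.mem_sigma, Finset.mem_filter, Nat.mem_divisors, Nat.mem_divisors] at hp
    obtain ⟨⟨hk'd, _⟩, ⟨⟨hud, _⟩, hco⟩⟩ := hp
    have hupos : 0 < u := Nat.pos_of_dvd_of_pos hud hl₀
    have hg : Nat.gcd (u * k') l₀ = u := gcd_mul_eq u k' l₀ hud hupos hco
    show (⟨(u * k') / Nat.gcd (u * k') l₀, Nat.gcd (u * k') l₀⟩ : Σ _ : ℕ, ℕ) = ⟨k', u⟩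
    rw [hg, Nat.mul_div_cancel_left k' hupos]
  · intro k hk
    simp only
    rw [Nat.mul_div_cancel' (Nat.gcd_dvd_left k l₀)]

end
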